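/- For a nontrivial connected graph G, the Connected-compelling chromatic number of G is at least max{χ(G), γ_c(G)} and at most χ(G) + γ_c(G). -/
import Mathlib


open SimpleGraph

/-- A proper coloring of `G` with `k` colors. -/
def ProperColoring {V : Type*} {k : ℕ} (G : SimpleGraph V) (c : V → Fin k) : Prop :=
  ∀ ⦃u v : V⦄, G.Adj u v → c u ≠ c v

/-- `f` selects a rainbow committee of the coloring `c`: one vertex of each color. -/
def IsRainbow {V : Type*} {k : ℕ} (c : V → Fin k) (f : Fin k → V) : Prop :=
  ∀ i : Fin k, c (f i) = i

/-- The coloring `c` compels property `P`: every rainbow committee has property `P`. -/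
def Compels {V : Type*} {k : ℕ} (c : V → Fin k) (P : Set V → Prop) : Prop :=
  ∀ f : Fin k → V, IsRainbow c f → P (Set.range f)

/-- The `P`-compelling chromatic number of `G`: the least number of colors in a proper
coloring, using every color, in which every rainbow committee has property `P`. -/
noncomputable def compellingChromNum {V : Type*} (G : SimpleGraph V) (P : Set V → Prop) : ℕ :=
  sInf {k : ℕ | ∃ c : V → Fin k,
    ProperColoring G c ∧ Function.Surjective c ∧ Compels c P}

/-- Property `Connected`: the set induces a connected subgraph of `G`. -/
def InducesConnected {V : Type*} (G : SimpleGraph V) (S : Set V) : Prop :=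
  (G.induce S).Connected

/-- The Connected-compelling chromatic number. -/
noncomputable def connCompellingChromNum {V : Type*} (G : SimpleGraph V) : ℕ :=
  compellingChromNum G (InducesConnected G)

/-- `S` is a connected dominating set of `G`. -/
def IsCDS {V : Type*} (G : SimpleGraph V) (S : Set V) : Prop :=
  (G.induce S).Connected ∧ ∀ v ∉ S, ∃ u ∈ S, G.Adj u v

/-- The connected domination number of `G`. -/
noncomputable def connDominationNum {V : Type*} (G : SimpleGraph V) : ℕ :=
  sInf {n : ℕ | ∃ S : Set V, IsCDS G S ∧ S.ncard = n}

lemma aux_natAdd_inj {m k : ℕ} {a b : Fin k} (h : Fin.natAdd m a = Fin.natAdd m b) : a = b := by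
  have := congrArg Fin.val h
  simp only [Fin.coe_natAdd] at this
  exact Fin.ext (by omega)

lemma aux_induce_connected {V : Type*} (G : SimpleGraph V) {S R : Set V}
    (hSR : S ⊆ R) (hS : (G.induce S).Connected)
    (hdom : ∀ x ∈ R, x ∉ S → ∃ u ∈ S, G.Adj u x) :
    (G.induce R).Connected := by
  obtain ⟨⟨s₀, hs₀⟩⟩ := hS.nonempty
  haveI hne : Nonempty ↥R := ⟨⟨s₀, hSR hs₀⟩⟩
  let ι : G.induce S →g G.induce R := ⟨fun v => ⟨v.1, hSR v.2⟩, fun {a b} hab => hab⟩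
  have key : ∀ a : ↥R, ∃ b : ↥S, (G.induce R).Reachable a ⟨b.1, hSR b.2⟩ := by
    rintro ⟨a, ha⟩
    by_cases h : a ∈ S
    · exact ⟨⟨a, h⟩, Reachable.refl _⟩
    · obtain ⟨u, hu, hadj⟩ := hdom a ha h
      refine ⟨⟨u, hu⟩, SimpleGraph.Adj.reachable ?_⟩
      exact hadj.symm
  constructor
  intro a b
  obtain ⟨sa, ha⟩ := key a
  obtain ⟨sb, hb⟩ := key b
  exact ha.trans ((Reachable.map ι (hS.preconnected sa sb)).trans hb.symm)

lemma aux_exists_adj {W : Type*} (H : SimpleGraph W) (h : H.Connected) {a b : W}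
    (hne : a ≠ b) : ∃ c, H.Adj a c := by
  obtain ⟨w⟩ := h a b
  cases w with
  | nil => exact absurd rfl hne
  | cons h p => exact ⟨_, h⟩

/-- For a nontrivial connected graph `G`, the Connected-compelling chromatic number is at
least `max {χ(G), γ_c(G)}` and at most `χ(G) + γ_c(G)`. -/
theorem connCompellingChromNum_bounds {V : Type*} [Fintype V] [Nontrivial V]
    (G : SimpleGraph V) (hconn : G.Connected) :
    max G.chromaticNumber ((connDominationNum G : ℕ) : ℕ∞) ≤
        (connCompellingChromNum G : ℕ∞) ∧
      (connCompellingChromNum G : ℕ∞) ≤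
        G.chromaticNumber + ((connDominationNum G : ℕ) : ℕ∞) := by
  classical
  -- G has an edge
  obtain ⟨x0, y0, hxy0⟩ := exists_pair_ne V
  obtain ⟨e1, e2, hedge⟩ : ∃ a b : V, G.Adj a b := by
    obtain ⟨w⟩ := hconn x0 y0
    cases w with
    | nil => exact absurd rfl hxy0
    | cons h p => exact ⟨_, _, h⟩
  set γ := connDominationNum G with hγdef
  -- the domination set is nonempty
  have hγne : {n : ℕ | ∃ S : Set V, IsCDS G S ∧ S.ncard = n}.Nonempty := by
    refine ⟨(Set.univ : Set V).ncard, Set.univ, ⟨?_, ?_⟩, rfl⟩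
    · exact (induceUnivIso G).connected_iff.mpr hconn
    · intro v hv; exact absurd (Set.mem_univ v) hv
  obtain ⟨S, hScds, hScard⟩ : ∃ S : Set V, IsCDS G S ∧ S.ncard = γ := Nat.sInf_mem hγne
  -- chromatic data
  set χn := (G.chromaticNumber).toNat with hχdef
  have hcol : G.Colorable χn := G.colorable_chromaticNumber_of_fintype
  have hχtop : G.chromaticNumber ≠ ⊤ :=
    chromaticNumber_ne_top_iff_exists.mpr ⟨_, G.colorable_of_fintype⟩
  have hχcast : (χn : ℕ∞) = G.chromaticNumber := ENat.coe_toNat hχtop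
  obtain ⟨c0⟩ := hcol
  -- equivalences
  have hcardS : Fintype.card ↥S = γ := by
    rw [← Nat.card_eq_fintype_card, Nat.card_coe_set_eq, hScard]
  let eS : ↥S ≃ Fin γ := Fintype.equivFinOfCardEq hcardS
  let D : Finset (Fin χn) := Finset.univ.filter (fun j => ∃ v, v ∉ S ∧ c0 v = j)
  set m := D.card with hmdef
  have hm_le : m ≤ χn := le_trans (Finset.card_le_card (Finset.subset_univ D)) (by simp)
  let eD : ↥D ≃ Fin m := Fintype.equivFinOfCardEq (Fintype.card_coe D)
  -- the coloring
  have hmem : ∀ v : V, v ∉ S → c0 v ∈ D := by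
    intro v hv
    simp only [D, Finset.mem_filter, Finset.mem_univ, true_and]
    exact ⟨v, hv, rfl⟩
  let c : V → Fin (m + γ) := fun v =>
    if h : v ∈ S then Fin.natAdd m (eS ⟨v, h⟩)
    else Fin.castAdd γ (eD ⟨c0 v, hmem v h⟩)
  have hcS : ∀ v (h : v ∈ S), c v = Fin.natAdd m (eS ⟨v, h⟩) := fun v h => dif_pos h
  have hcNS : ∀ v (h : v ∉ S), c v = Fin.castAdd γ (eD ⟨c0 v, hmem v h⟩) := fun v h => dif_neg h
  have hproper : ProperColoring G c := by
    intro u v hadj hcc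
    by_cases hu : u ∈ S <;> by_cases hv : v ∈ S
    · rw [hcS u hu, hcS v hv] at hcc
      have := eS.injective (aux_natAdd_inj hcc)
      exact hadj.ne (congrArg Subtype.val this)
    · rw [hcS u hu, hcNS v hv] at hcc
      have := congrArg Fin.val hcc
      simp only [Fin.coe_natAdd, Fin.coe_castAdd] at this
      have := (eD ⟨c0 v, hmem v hv⟩).isLt
      omega
    · rw [hcNS u hu, hcS v hv] at hcc
      have := congrArg Fin.val hcc
      simp only [Fin.coe_natAdd, Fin.coe_castAdd] at this
      have := (eD ⟨c0 u, hmem u hu⟩).isLt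
      omega
    · rw [hcNS u hu, hcNS v hv] at hcc
      have h1 : (eD ⟨c0 u, hmem u hu⟩) = (eD ⟨c0 v, hmem v hv⟩) :=
        Fin.ext (by simpa [Fin.coe_castAdd] using congrArg Fin.val hcc)
      have := eD.injective h1
      exact c0.valid hadj (congrArg Subtype.val this)
  have hsurj : Function.Surjective c := by
    intro i
    by_cases h : (i : ℕ) < m
    · obtain ⟨⟨d, hd⟩, hdspec⟩ : ∃ d : ↥D, eD d = ⟨(i : ℕ), h⟩ := ⟨eD.symm _, eD.apply_symm_apply _⟩
      simp only [D, Finset.mem_filter, Finset.mem_univ, true_and] at hd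
      obtain ⟨v, hvS, hvc⟩ := hd
      refine ⟨v, ?_⟩
      rw [hcNS v hvS]
      apply Fin.ext
      simp only [Fin.coe_castAdd]
      have : (⟨c0 v, hmem v hvS⟩ : ↥D) = ⟨d, by rw [← hvc]; exact hmem v hvS⟩ := Subtype.ext hvc
      rw [this, hdspec]
    · have hlt : (i : ℕ) - m < γ := by have := i.isLt; omega
      obtain ⟨⟨s, hs⟩, hsspec⟩ : ∃ s : ↥S, eS s = ⟨(i : ℕ) - m, hlt⟩ :=
        ⟨eS.symm _, eS.apply_symm_apply _⟩
      refine ⟨s, ?_⟩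
      rw [hcS s hs]
      apply Fin.ext
      simp only [Fin.coe_natAdd, hsspec]
      omega
  have hcompels : Compels c (InducesConnected G) := by
    intro f hf
    have hSsub : S ⊆ Set.range f := by
      intro s hs
      set i := Fin.natAdd m (eS ⟨s, hs⟩) with hidef
      have hci : c (f i) = i := hf i
      by_cases h : f i ∈ S
      · rw [hcS _ h] at hci
        have := eS.injective (aux_natAdd_inj hci)
        exact ⟨i, congrArg Subtype.val this⟩
      · rw [hcNS _ h] at hci
        have := congrArg Fin.val hci
        simp only [Fin.coe_natAdd, Fin.coe_castAdd, hidef] at this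
        have := (eD ⟨c0 (f i), hmem _ h⟩).isLt
        omega
    refine aux_induce_connected G hSsub hScds.1 ?_
    intro x _ hxS
    exact hScds.2 x hxS
  have hkmem : m + γ ∈ {k : ℕ | ∃ c : V → Fin k,
      ProperColoring G c ∧ Function.Surjective c ∧ Compels c (InducesConnected G)} :=
    ⟨c, hproper, hsurj, hcompels⟩
  set K := connCompellingChromNum G with hKdef
  have hKle : K ≤ m + γ := Nat.sInf_le hkmem
  -- K realizes the infimum
  have hKmem : K ∈ {k : ℕ | ∃ c : V → Fin k,
      ProperColoring G c ∧ Function.Surjective c ∧ Compels c (InducesConnected G)} :=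
    Nat.sInf_mem ⟨m + γ, hkmem⟩
  obtain ⟨c', hp', hsurj', hcomp'⟩ := hKmem
  -- K ≥ 2
  have hK0 : K ≠ 0 := by
    intro h
    have hx : Fin K := c' e1
    rw [h] at hx
    exact hx.elim0
  have hK2 : 2 ≤ K := by
    rcases Nat.lt_or_ge K 2 with h | h
    · interval_cases K
      · exact absurd rfl hK0
      · exact absurd (Subsingleton.elim (c' e1) (c' e2)) (hp' hedge)
    · exact h
  -- lower bound: chromatic number
  have hχK : G.chromaticNumber ≤ (K : ℕ∞) :=
    chromaticNumber_le_iff_colorable.mpr ⟨Coloring.mk c' (fun {u v} h => hp' h)⟩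
  -- lower bound: domination number
  have hγK : γ ≤ K := by
    choose f hf using hsurj'
    have hrb : IsRainbow c' f := fun i => hf i
    have hconn' : (G.induce (Set.range f)).Connected := hcomp' f hrb
    have hfin : Function.Injective f := by
      intro a b hab
      rw [← hf a, ← hf b, hab]
    have hdom : ∀ v ∉ Set.range f, ∃ u ∈ Set.range f, G.Adj u v := by
      intro v hv
      set f' : Fin K → V := Function.update f (c' v) v with hf'def
      have hrb' : IsRainbow c' f' := by
        intro i
        by_cases h : i = c' v
        · subst h; rw [hf'def, Function.update_self]
        · rw [hf'def, Function.update_of_ne h]; exact hf i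
      have hconn'' : (G.induce (Set.range f')).Connected := hcomp' f' hrb'
      have hvmem : v ∈ Set.range f' := ⟨c' v, Function.update_self _ _ _⟩
      haveI : Nontrivial (Fin K) := Fin.nontrivial_iff_two_le.mpr hK2
      obtain ⟨i0, hi0⟩ := exists_ne (c' v)
      have ha_ne : f' i0 ≠ v := by
        intro h
        apply hi0
        rw [← hrb' i0, h]
      obtain ⟨w, hw⟩ := aux_exists_adj _ hconn''
        (a := ⟨v, hvmem⟩) (b := ⟨f' i0, ⟨i0, rfl⟩⟩)
        (fun h => ha_ne (congrArg Subtype.val h).symm)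
      have hwadj : G.Adj v (w : V) := hw
      obtain ⟨j, hj⟩ := w.2
      have hjne : j ≠ c' v := by
        intro h
        apply hwadj.ne'
        rw [← hj, h, hf'def, Function.update_self]
      refine ⟨w, ⟨j, ?_⟩, hwadj.symm⟩
      rw [← hj, hf'def, Function.update_of_ne hjne]
    have hcard : (Set.range f).ncard = K := by
      rw [← Nat.card_coe_set_eq, Nat.card_range_of_injective hfin,
        Nat.card_eq_fintype_card, Fintype.card_fin]
    exact Nat.sInf_le ⟨Set.range f, ⟨hconn', hdom⟩, hcard⟩
  refine ⟨max_le hχK (by exact_mod_cast hγK), ?_⟩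
  calc (K : ℕ∞) ≤ ((m + γ : ℕ) : ℕ∞) := by exact_mod_cast hKle
    _ ≤ ((χn + γ : ℕ) : ℕ∞) := by exact_mod_cast Nat.add_le_add_right hm_le γ
    _ = (χn : ℕ∞) + (γ : ℕ∞) := by push_cast; rfl
    _ = G.chromaticNumber + (γ : ℕ∞) := by rw [hχcast]
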